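/- Let U₀, V₀ > 0, K ≥ 1 integer, Λ(x,λ)=erf((x-0.5-λ)/√(2λ)). Define F(ξ_R, ξ_FC) = (1/4)[3 - Λ(ξ_FC,V₀) - (1+Λ(ξ_FC,V₀))·Λ(ξ_R,U₀)]. Then 0 ≤ F ≤ 1, F is nonincreasing in ξ_R and in ξ_FC, and ξ_R ↦ F^K is convex on {ξ_R ≥ U₀+0.5} for fixed ξ_FC, and ξ_FC ↦ F^K is convex on {ξ_FC ≥ V₀+0.5} for fixed ξ_R. -/

import Mathlib

/-- The Gauss error function `erf z = (2/√π) ∫_0^z e^{-t²} dt`. -/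
noncomputable def erf (z : ℝ) : ℝ := (2 / Real.sqrt Real.pi) * ∫ t in (0:ℝ)..z, Real.exp (-t ^ 2)

/-- `Λ(x,λ)`: the Gaussian (continuity-corrected) approximation of the Poisson CDF. -/
noncomputable def Lam (x lam : ℝ) : ℝ := erf ((x - 0.5 - lam) / Real.sqrt (2 * lam))

/-- Upper bound `P̃⁺_fa` on the end-to-end false-alarm probability. -/
noncomputable def F (U₀ V₀ ξR ξFC : ℝ) : ℝ :=
  (1 / 4) * (3 - Lam ξFC V₀ - (1 + Lam ξFC V₀) * Lam ξR U₀)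

open Real MeasureTheory intervalIntegral Set

lemma gcont : Continuous (fun t : ℝ => Real.exp (-t ^ 2)) := by continuity

lemma gii (a b : ℝ) : IntervalIntegrable (fun t : ℝ => Real.exp (-t ^ 2)) volume a b :=
  gcont.intervalIntegrable a b

lemma hasDerivAt_erf (z : ℝ) :
    HasDerivAt erf (2 / Real.sqrt Real.pi * Real.exp (-z ^ 2)) z := by
  have h := intervalIntegral.integral_hasDerivAt_right (gii 0 z)
    (gcont.stronglyMeasurableAtFilter _ _) gcont.continuousAt
  exact h.const_mul (2 / Real.sqrt Real.pi)

lemma deriv_erf : deriv erf = fun z => 2 / Real.sqrt Real.pi * Real.exp (-z ^ 2) :=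
  funext fun z => (hasDerivAt_erf z).deriv

lemma erf_mono : Monotone erf := by
  refine monotone_of_deriv_nonneg (fun z => (hasDerivAt_erf z).differentiableAt) fun x => ?_
  rw [deriv_erf]; positivity

lemma erf_zero : erf 0 = 0 := by simp [erf]

lemma erf_odd (z : ℝ) : erf (-z) = -erf z := by
  unfold erf
  rw [← mul_neg]
  congr 1
  have h : (∫ t in (0:ℝ)..(-z), Real.exp (-t ^ 2))
      = ∫ t in (0:ℝ)..(-z), Real.exp (-(-t) ^ 2) := by
    congr 1; funext t; ring_nf
  rw [h, intervalIntegral.integral_comp_neg (fun t => Real.exp (-t ^ 2)), neg_neg, neg_zero,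
    intervalIntegral.integral_symm]

lemma erf_le_one (z : ℝ) : erf z ≤ 1 := by
  rcases le_or_gt 0 z with hz | hz
  · have h1 : (∫ t in (0:ℝ)..z, Real.exp (-t ^ 2)) ≤ ∫ t in Ioi (0:ℝ), Real.exp (-t ^ 2) := by
      rw [intervalIntegral.integral_of_le hz]
      refine setIntegral_mono_set ?_ ?_ ?_
      · have := integrable_exp_neg_mul_sq (b := 1) one_pos
        simpa using this.integrableOn
      · filter_upwards with t using (Real.exp_pos _).le
      · exact HasSubset.Subset.eventuallyLE Ioc_subset_Ioi_self
    have h2 : (∫ t in Ioi (0:ℝ), Real.exp (-t ^ 2)) = Real.sqrt Real.pi / 2 := by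
      simpa using integral_gaussian_Ioi 1
    have hs : (0:ℝ) < Real.sqrt Real.pi := Real.sqrt_pos.2 Real.pi_pos
    have hle : erf z ≤ 2 / Real.sqrt Real.pi * (Real.sqrt Real.pi / 2) := by
      unfold erf
      exact mul_le_mul_of_nonneg_left (h1.trans_eq h2) (by positivity)
    calc erf z ≤ 2 / Real.sqrt Real.pi * (Real.sqrt Real.pi / 2) := hle
      _ = 1 := by field_simp
  · have h := erf_mono hz.le
    rw [erf_zero] at h
    linarith

lemma neg_one_le_erf (z : ℝ) : -1 ≤ erf z := by
  have := erf_le_one (-z)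
  rw [erf_odd] at this
  linarith

lemma erf_concave : ConcaveOn ℝ (Ici (0:ℝ)) erf := by
  refine AntitoneOn.concaveOn_of_deriv (convex_Ici 0)
    (fun z _ => (hasDerivAt_erf z).differentiableAt.continuousAt.continuousWithinAt)
    (fun z _ => (hasDerivAt_erf z).differentiableAt.differentiableWithinAt) ?_
  rw [deriv_erf]
  intro x hx y hy hxy
  rw [interior_Ici] at hx hy
  have hsq : x ^ 2 ≤ y ^ 2 := by nlinarith [le_of_lt (mem_Ioi.mp hx), le_of_lt (mem_Ioi.mp hy)]
  exact mul_le_mul_of_nonneg_left (Real.exp_le_exp.2 (by linarith))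
    (by positivity : (0:ℝ) ≤ 2 / Real.sqrt Real.pi)

lemma lam_mono (lam : ℝ) (hl : 0 < lam) : Monotone (fun x => Lam x lam) := by
  have hs : 0 < Real.sqrt (2 * lam) := Real.sqrt_pos.2 (by linarith)
  intro x y hxy
  exact erf_mono (div_le_div_of_nonneg_right (by linarith) hs.le)

lemma lam_bounds (x lam : ℝ) : -1 ≤ Lam x lam ∧ Lam x lam ≤ 1 :=
  ⟨neg_one_le_erf _, erf_le_one _⟩

lemma lam_concave (lam : ℝ) (hl : 0 < lam) :
    ConcaveOn ℝ (Ici (lam + 0.5)) (fun x => Lam x lam) := by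
  have hs : 0 < Real.sqrt (2 * lam) := Real.sqrt_pos.2 (by linarith)
  refine ⟨convex_Ici _, ?_⟩
  intro x hx y hy α β hα hβ hαβ
  rw [mem_Ici] at hx hy
  have hx' : (x - 0.5 - lam) / Real.sqrt (2 * lam) ∈ Ici (0:ℝ) :=
    mem_Ici.2 (div_nonneg (by norm_num at hx ⊢; linarith) hs.le)
  have hy' : (y - 0.5 - lam) / Real.sqrt (2 * lam) ∈ Ici (0:ℝ) :=
    mem_Ici.2 (div_nonneg (by norm_num at hy ⊢; linarith) hs.le)
  have key : (α • x + β • y - 0.5 - lam) / Real.sqrt (2 * lam)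
      = α • ((x - 0.5 - lam) / Real.sqrt (2 * lam))
        + β • ((y - 0.5 - lam) / Real.sqrt (2 * lam)) := by
    simp only [smul_eq_mul]
    field_simp
    nlinarith [hαβ]
  have h := erf_concave.2 hx' hy' hα hβ hαβ
  simp only [Lam]
  rw [key]
  exact h

theorem Pfa_upper_bound_properties (U₀ V₀ : ℝ) (hU : 0 < U₀) (hV : 0 < V₀)
    (K : ℕ) (hK : 1 ≤ K) :
    (∀ ξR ξFC : ℝ, 0 ≤ F U₀ V₀ ξR ξFC ∧ F U₀ V₀ ξR ξFC ≤ 1) ∧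
    (∀ ξFC : ℝ, Antitone (fun ξR => F U₀ V₀ ξR ξFC)) ∧
    (∀ ξR : ℝ, Antitone (fun ξFC => F U₀ V₀ ξR ξFC)) ∧
    (∀ ξFC : ℝ, ConvexOn ℝ (Set.Ici (U₀ + 0.5)) (fun ξR => F U₀ V₀ ξR ξFC ^ K)) ∧
    (∀ ξR : ℝ, ConvexOn ℝ (Set.Ici (V₀ + 0.5)) (fun ξFC => F U₀ V₀ ξR ξFC ^ K)) := by
  have hbounds : ∀ ξR ξFC : ℝ, 0 ≤ F U₀ V₀ ξR ξFC ∧ F U₀ V₀ ξR ξFC ≤ 1 := by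
    intro ξR ξFC
    obtain ⟨ha1, ha2⟩ := lam_bounds ξR U₀
    obtain ⟨hb1, hb2⟩ := lam_bounds ξFC V₀
    unfold F
    constructor
    · nlinarith [mul_nonneg (sub_nonneg.2 hb2) (sub_nonneg.2 ha2)]
    · nlinarith [mul_nonneg (by linarith : (0:ℝ) ≤ 1 + Lam ξFC V₀)
        (by linarith : (0:ℝ) ≤ 1 + Lam ξR U₀)]
  refine ⟨hbounds, ?_, ?_, ?_, ?_⟩
  · intro ξFC x y hxy
    have ha := lam_mono U₀ hU hxy
    obtain ⟨hb1, hb2⟩ := lam_bounds ξFC V₀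
    simp only [F]
    nlinarith [ha, hb1]
  · intro ξR x y hxy
    have hb := lam_mono V₀ hV hxy
    obtain ⟨ha1, ha2⟩ := lam_bounds ξR U₀
    simp only [F]
    nlinarith [hb, ha1]
  · intro ξFC
    set b := Lam ξFC V₀ with hb
    have hb1 : -1 ≤ b := (lam_bounds ξFC V₀).1
    have hd : (0:ℝ) ≤ (1 + b) / 4 := by linarith
    have h2 : ConvexOn ℝ (Ici (U₀ + 0.5)) (fun x => F U₀ V₀ x ξFC) := by
      have h0 : ConvexOn ℝ (Ici (U₀ + 0.5)) ((fun x => 1 / 4 * (3 - b)) + -fun x => ((1 + b) / 4) • Lam x U₀) := (convexOn_const ((1 / 4) * (3 - b)) (convex_Ici (U₀ + 0.5))).add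
        (((lam_concave U₀ hU).smul hd).neg)
      convert h0 using 1
      funext x
      show F U₀ V₀ x ξFC = _
      simp only [Pi.add_apply, Pi.neg_apply, Pi.smul_apply, smul_eq_mul, F, ← hb]
      ring
    have := h2.pow (fun x _ => (hbounds x ξFC).1) K
    exact this
  · intro ξR
    set a := Lam ξR U₀ with ha
    have ha1 : -1 ≤ a := (lam_bounds ξR U₀).1
    have hd : (0:ℝ) ≤ (1 + a) / 4 := by linarith
    have h2 : ConvexOn ℝ (Ici (V₀ + 0.5)) (fun x => F U₀ V₀ ξR x) := by
      have h0 : ConvexOn ℝ (Ici (V₀ + 0.5)) ((fun x => 1 / 4 * (3 - a)) + -fun x => ((1 + a) / 4) • Lam x V₀) := (convexOn_const ((1 / 4) * (3 - a)) (convex_Ici (V₀ + 0.5))).add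
        (((lam_concave V₀ hV).smul hd).neg)
      convert h0 using 1
      funext x
      show F U₀ V₀ ξR x = _
      simp only [Pi.add_apply, Pi.neg_apply, Pi.smul_apply, smul_eq_mul, F, ← ha]
      ring
    have := h2.pow (fun x _ => (hbounds ξR x).1) K
    exact this
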